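/- Let T be a bounded operator with closed range on a complex Hilbert space, with polar decomposition T = U_T |T| where U_T is the partial isometry with ker(U_T) = ker(T), and set V = U_T − T. Then U_T* V is a positive operator if and only if ‖T‖ ≤ 1. -/

import Mathlib

open ContinuousLinearMap
open scoped InnerProductSpace

/-- `Td` is the Moore–Penrose inverse of `T`. -/
def IsMoorePenroseInverse {H : Type*} [NormedAddCommGroup H] [InnerProductSpace ℂ H]
    [CompleteSpace H] (T Td : H →L[ℂ] H) : Prop :=
  T ∘L Td ∘L T = T ∧ Td ∘L T ∘L Td = Td ∧
    IsSelfAdjoint (T ∘L Td) ∧ IsSelfAdjoint (Td ∘L T)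
/-- For the polar proper splitting `T = U_T - V` with `V = U_T - T`, the operator
`U_T* V` is positive iff `‖T‖ ≤ 1`. -/
theorem polar_splitting_positive_iff_norm_le_one
    {H : Type*} [NormedAddCommGroup H] [InnerProductSpace ℂ H] [CompleteSpace H]
    (T UT R : H →L[ℂ] H)
    (hTcr : IsClosed (LinearMap.range (T : H →ₗ[ℂ] H) : Set H))
    (hR : R.IsPositive) (hR2 : R ∘L R = adjoint T ∘L T)
    (hpolar : T = UT ∘L R)
    (hpi : UT ∘L adjoint UT ∘L UT = UT)
    (hkerU : LinearMap.ker (UT : H →ₗ[ℂ] H) = LinearMap.ker (T : H →ₗ[ℂ] H)) :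
    (adjoint UT ∘L (UT - T)).IsPositive ↔ ‖T‖ ≤ 1 := by
  have hRsa : IsSelfAdjoint R := hR.isSelfAdjoint
  set P : H →L[ℂ] H := adjoint UT ∘L UT with hPdef
  have hPsa : IsSelfAdjoint P := by
    rw [IsSelfAdjoint, star_eq_adjoint, hPdef, adjoint_comp, adjoint_adjoint]
  have hRinner : ∀ a b : H, ⟪R a, b⟫_ℂ = ⟪a, R b⟫_ℂ := by
    intro a b
    conv_lhs => rw [← hRsa.adjoint_eq]
    exact adjoint_inner_left R b a
  have hPinner : ∀ a b : H, ⟪P a, b⟫_ℂ = ⟪a, P b⟫_ℂ := by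
    intro a b
    conv_lhs => rw [← hPsa.adjoint_eq]
    exact adjoint_inner_left P b a
  have hpi' : ∀ x, UT (adjoint UT (UT x)) = UT x := by
    intro x
    have := congrArg (fun S : H →L[ℂ] H => S x) hpi
    exact this
  have hpolar' : ∀ x, T x = UT (R x) := by
    intro x
    have := congrArg (fun S : H →L[ℂ] H => S x) hpolar
    simpa using this
  have hP2' : ∀ x, P (P x) = P x := by
    intro x
    show adjoint UT (UT (adjoint UT (UT x))) = adjoint UT (UT x)
    rw [hpi' x]
  -- ker T ⊆ ker R
  have hkerTR : ∀ x, T x = 0 → R x = 0 := by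
    intro x hx
    have h1 : ⟪R x, R x⟫_ℂ = ⟪T x, T x⟫_ℂ := by
      have e2 : R (R x) = adjoint T (T x) := by
        have := congrArg (fun S : H →L[ℂ] H => S x) hR2
        simpa using this
      rw [hRinner, e2, adjoint_inner_right]
    rw [hx] at h1
    simp only [inner_zero_right] at h1
    exact inner_self_eq_zero.mp h1
  have hkerRU : ∀ z, UT z = 0 → R z = 0 := by
    intro z hz
    have : z ∈ LinearMap.ker (T : H →ₗ[ℂ] H) := hkerU ▸ (by simpa [LinearMap.mem_ker] using hz)
    exact hkerTR z (by simpa [LinearMap.mem_ker] using this)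
  have inner_P : ∀ x y, ⟪P x, y⟫_ℂ = ⟪UT x, UT y⟫_ℂ := by
    intro x y
    show ⟪adjoint UT (UT x), y⟫_ℂ = _
    rw [adjoint_inner_left]
  -- P acts as identity on range R
  have hPR : ∀ x, P (R x) = R x := by
    intro x
    set y := R x with hy
    set z := y - P y with hzdef
    have hz : UT z = 0 := by
      have : UT (P y) = UT y := hpi' y
      simp [hzdef, map_sub, this]
    have hRz : R z = 0 := hkerRU z hz
    have hyz : ⟪y, z⟫_ℂ = 0 := by
      rw [hy, hRinner, hRz, inner_zero_right]
    have hPyz : ⟪P y, z⟫_ℂ = 0 := by rw [inner_P, hz, inner_zero_right]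
    have hzz : ⟪z, z⟫_ℂ = 0 := by
      rw [hzdef, inner_sub_left]
      rw [← hzdef, hyz, hPyz, sub_zero]
    have : z = 0 := inner_self_eq_zero.mp hzz
    have : y - P y = 0 := this
    linear_combination (norm := module) -this
  have hRP : ∀ x, R (P x) = R x := by
    intro x
    apply ext_inner_right ℂ
    intro v
    rw [hRinner, hPinner, hPR v, ← hRinner]
  -- the key operator identity U* (U - T) = P - R
  have hUV : adjoint UT ∘L (UT - T) = P - R := by
    ext x
    have h1 : adjoint UT (T x) = R x := by
      rw [hpolar' x]
      exact hPR x
    simp [comp_apply, map_sub, h1, hPdef]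
  -- ⟪P x, x⟫ = ⟪P x, P x⟫
  have hPxx : ∀ x, ⟪P x, x⟫_ℂ = ⟪P x, P x⟫_ℂ := by
    intro x
    calc ⟪P x, x⟫_ℂ = ⟪x, P x⟫_ℂ := hPinner x x
      _ = ⟪x, P (P x)⟫_ℂ := by rw [hP2' x]
      _ = ⟪P x, P x⟫_ℂ := (hPinner x (P x)).symm
  -- ⟪R (P x), P x⟫ = ⟪R x, x⟫
  have hRPxx : ∀ x, ⟪R (P x), P x⟫_ℂ = ⟪R x, x⟫_ℂ := by
    intro x
    calc ⟪R (P x), P x⟫_ℂ = ⟪R x, P x⟫_ℂ := by rw [hRP x]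
      _ = ⟪P (R x), x⟫_ℂ := (hPinner (R x) x).symm
      _ = ⟪R x, x⟫_ℂ := by rw [hPR x]
  -- ‖T‖ = ‖R‖
  have hnorm : ‖T‖ = ‖R‖ := by
    have h1 : ‖T‖ * ‖T‖ = ‖adjoint T ∘L T‖ := (norm_adjoint_comp_self T).symm
    have h2 : ‖R‖ * ‖R‖ = ‖adjoint R ∘L R‖ := (norm_adjoint_comp_self R).symm
    rw [hRsa.adjoint_eq, hR2, ← h1] at h2
    exact (mul_self_inj (norm_nonneg _) (norm_nonneg _)).mp h2.symm
  -- P ≤ 1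
  have hPle : (1 - P : H →L[ℂ] H).IsPositive := by
    constructor
    · exact ((IsSelfAdjoint.one _).sub hPsa).isSymmetric
    · intro x
      rw [reApplyInnerSelf_apply]
      have hPx : ‖P x‖ ≤ ‖x‖ := by
        have h1 : RCLike.re ⟪P x, P x⟫_ℂ = ‖P x‖ ^ 2 := inner_self_eq_norm_sq _
        have h2 : RCLike.re ⟪P x, x⟫_ℂ ≤ ‖P x‖ * ‖x‖ := by
          calc RCLike.re ⟪P x, x⟫_ℂ ≤ ‖(⟪P x, x⟫_ℂ : ℂ)‖ := RCLike.re_le_norm _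
            _ ≤ ‖P x‖ * ‖x‖ := norm_inner_le_norm _ _
        have h3 : ‖P x‖ ^ 2 ≤ ‖P x‖ * ‖x‖ := by rw [← h1, ← hPxx x]; exact h2
        nlinarith [norm_nonneg (P x), norm_nonneg x]
      have e1 : RCLike.re ⟪P x, x⟫_ℂ = ‖P x‖ ^ 2 := by
        rw [hPxx x]; exact inner_self_eq_norm_sq _
      have e2 : RCLike.re ⟪x, x⟫_ℂ = ‖x‖ ^ 2 := inner_self_eq_norm_sq _
      simp only [sub_apply, one_apply_eq_self, inner_sub_left, map_sub, e1, e2]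
      nlinarith [norm_nonneg (P x), norm_nonneg x]
  have hRnn : (0 : H →L[ℂ] H) ≤ R := (nonneg_iff_isPositive R).mpr hR
  have hkey : ‖R‖ ≤ 1 ↔ R ≤ 1 := CStarAlgebra.norm_le_one_iff_of_nonneg R hRnn
  rw [hUV, hnorm]
  constructor
  · intro hpos
    rw [hkey]
    calc R ≤ P := (le_def R P).mpr hpos
      _ ≤ 1 := (le_def P 1).mpr hPle
  · intro hn
    have hR1 : (1 - R : H →L[ℂ] H).IsPositive := (le_def R 1).mp (hkey.mp hn)
    constructor
    · exact (hPsa.sub hRsa).isSymmetric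
    · intro x
      rw [reApplyInnerSelf_apply]
      have h1 := hR1.2 (P x)
      rw [reApplyInnerSelf_apply] at h1
      simp only [sub_apply, one_apply_eq_self, inner_sub_left, map_sub] at h1 ⊢
      rw [hPxx x]
      rw [hRPxx x] at h1
      linarith
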